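/- Let d ≥ 2, let A be a real d×d matrix, r ≥ 0, and let x : [−r,∞) → ℝ^d be continuous, differentiable on (0,∞), with x(t) ∈ Δ_d for all t ≥ −r, satisfying the discrete-delay replicator equation x_i′(t) = x_i(t)·[(A x(t−r))_i − ⟨x(t), A x(t−r)⟩] for all t > 0 and all i ∈ {1,…,d}. Assume the replicator ODE has no interior rest point, i.e., there is no q ∈ Δ_d with q_i > 0 for all i and (Aq)_1 = (Aq)_2 = ⋯ = (Aq)_d. Then liminf_{t→∞} min_{1≤i≤d} x_i(t) = 0; that is, the solution is not bounded away from the boundary of the simplex Δ_d. -/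

import Mathlib

open Filter

/-- Separation lemma: if a compact convex set `S` contains no point `q` with `A.mulVec q`
having all components equal, then there is a linear functional `p` with `∑ p i = 0` that is
uniformly positive on `{A.mulVec q | q ∈ S}`. -/
lemma stmt_10_sep {d : ℕ} [Nonempty (Fin d)] (A : Matrix (Fin d) (Fin d) ℝ)
    (S : Set (Fin d → ℝ)) (hSc : IsCompact S) (hSconv : Convex ℝ S)
    (hdisj : ∀ q ∈ S, ¬ ∀ i j, A.mulVec q i = A.mulVec q j) :
    ∃ (p : Fin d → ℝ) (ε : ℝ), 0 < ε ∧ (∑ i, p i) = 0 ∧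
      ∀ q ∈ S, ε ≤ ∑ i, p i * A.mulVec q i := by
  classical
  set L : (Fin d → ℝ) →ₗ[ℝ] (Fin d → ℝ) := Matrix.mulVecLin A with hL
  have hLcont : Continuous L := L.continuous_of_finiteDimensional
  set C : Set (Fin d → ℝ) := L '' S with hC
  have hCc : IsCompact C := hSc.image hLcont
  have hCconv : Convex ℝ C := hSconv.linear_image L
  set W : Submodule ℝ (Fin d → ℝ) := Submodule.span ℝ {(1 : Fin d → ℝ)} with hW
  have hWclosed : IsClosed (W : Set (Fin d → ℝ)) := W.closed_of_finiteDimensional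
  have hWconv : Convex ℝ (W : Set (Fin d → ℝ)) := W.convex
  have hdisj' : Disjoint C (W : Set (Fin d → ℝ)) := by
    rw [Set.disjoint_left]
    rintro y ⟨q, hq, rfl⟩ hyW
    obtain ⟨a, ha⟩ := Submodule.mem_span_singleton.1 hyW
    refine hdisj q hq fun i j => ?_
    have hi : A.mulVec q i = a := by
      have h := congrFun ha i
      simp only [hL, Matrix.mulVecLin_apply, Pi.smul_apply, Pi.one_apply,
        smul_eq_mul, mul_one] at h
      exact h.symm
    have hj : A.mulVec q j = a := by
      have h := congrFun ha j
      simp only [hL, Matrix.mulVecLin_apply, Pi.smul_apply, Pi.one_apply,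
        smul_eq_mul, mul_one] at h
      exact h.symm
    rw [hi, hj]
  obtain ⟨φ, u, v, hCu, huv, hWv⟩ :=
    geometric_hahn_banach_compact_closed hCconv hCc hWconv hWclosed hdisj'
  have hone : ∀ c : ℝ, v < c * φ 1 := by
    intro c
    have hmem : (c • (1 : Fin d → ℝ)) ∈ W :=
      W.smul_mem c (Submodule.mem_span_singleton_self _)
    have := hWv _ hmem
    rwa [map_smul, smul_eq_mul] at this
  have hφ1 : φ 1 = 0 := by
    by_contra h
    have := hone ((v - 1) / φ 1)
    rw [div_mul_cancel₀ _ h] at this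
    linarith
  have hv0 : v < 0 := by have := hone 0; simpa using this
  -- representation of φ
  have hrep : ∀ y : Fin d → ℝ, φ y = ∑ i, y i * φ (Pi.single i 1) := by
    intro y
    have hy : y = ∑ i, y i • (Pi.single i 1 : Fin d → ℝ) := by
      funext j
      rw [Finset.sum_apply]
      classical
      simp [Pi.single_apply, Finset.sum_ite_eq' Finset.univ j]
    conv_lhs => rw [hy]
    rw [map_sum]
    simp [smul_eq_mul]
  refine ⟨fun i => -φ (Pi.single i 1), -v, by linarith, ?_, ?_⟩
  · have h1 : (1 : Fin d → ℝ) = ∑ i, Pi.single i (1 : ℝ) := by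
      funext j
      rw [Finset.sum_apply]
      classical
      simp [Pi.single_apply, Finset.sum_ite_eq' Finset.univ j]
    have h2 : φ 1 = ∑ i, φ (Pi.single i 1) := by rw [h1, map_sum]
    simp only [Finset.sum_neg_distrib, ← h2, hφ1, neg_zero]
  · intro q hq
    have hmem : L q ∈ C := Set.mem_image_of_mem _ hq
    have h2 : φ (L q) < u := hCu _ hmem
    have h3 : ∑ i, (-φ (Pi.single i 1)) * A.mulVec q i = -φ (A.mulVec q) := by
      rw [hrep (A.mulVec q), ← Finset.sum_neg_distrib]
      refine Finset.sum_congr rfl fun i _ => by ring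
    have hLq : φ (L q) = φ (A.mulVec q) := by rw [hL]; rfl
    rw [h3]
    rw [hLq] at h2
    linarith

/-- If the replicator ODE has no interior rest point, then every solution of
the discrete-delay replicator equation taking values in the simplex satisfies
`liminf_{t→∞} minᵢ xᵢ(t) = 0`, i.e. it is not bounded away from the boundary of the simplex. -/
theorem stmt_10 (d : ℕ) (hd : 2 ≤ d) (A : Matrix (Fin d) (Fin d) ℝ) (r : ℝ) (hr : 0 ≤ r)
    (x : ℝ → Fin d → ℝ)
    (hxcont : ContinuousOn x (Set.Ici (-r)))
    (hxsimplex : ∀ t : ℝ, -r ≤ t → x t ∈ stdSimplex ℝ (Fin d))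
    (hode : ∀ t : ℝ, 0 < t →
      HasDerivAt x
        (fun i => x t i * (A.mulVec (x (t - r)) i - ∑ k, x t k * A.mulVec (x (t - r)) k))
        t)
    (hnorest : ¬∃ q ∈ stdSimplex ℝ (Fin d),
      (∀ i, 0 < q i) ∧ ∀ i j, A.mulVec q i = A.mulVec q j) :
    Filter.liminf (fun t : ℝ => ⨅ i, x t i) atTop = 0 := by
  classical
  have hd0 : 0 < d := by omega
  haveI : Nonempty (Fin d) := ⟨⟨0, hd0⟩⟩
  set f : ℝ → ℝ := fun t => ⨅ i, x t i with hf
  have hx0 : ∀ t : ℝ, -r ≤ t → ∀ i, 0 ≤ x t i := fun t ht i => (hxsimplex t ht).1 i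
  have hx1 : ∀ t : ℝ, -r ≤ t → ∀ i, x t i ≤ 1 := by
    intro t ht i
    have := (hxsimplex t ht).2
    calc x t i ≤ ∑ k, x t k :=
          Finset.single_le_sum (fun j _ => hx0 t ht j) (Finset.mem_univ i)
      _ = 1 := this
  have hfle : ∀ t : ℝ, ∀ i, f t ≤ x t i := by
    intro t i
    exact ciInf_le (Set.Finite.bddBelow (Set.finite_range _)) i
  have hfge : ∀ t : ℝ, -r ≤ t → 0 ≤ f t := by
    intro t ht
    exact le_ciInf fun i => hx0 t ht i
  have hev0 : ∀ᶠ t in atTop, (0 : ℝ) ≤ f t :=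
    (eventually_ge_atTop (-r)).mono fun t ht => hfge t ht
  have hev1 : ∀ᶠ t in atTop, f t ≤ 1 :=
    (eventually_ge_atTop (-r)).mono fun t ht =>
      (hfle t ⟨0, hd0⟩).trans (hx1 t ht _)
  have hbdd : IsBoundedUnder (· ≥ ·) atTop f := isBoundedUnder_of_eventually_ge hev0
  have hcobdd : IsCoboundedUnder (· ≥ ·) atTop f :=
    Filter.isCoboundedUnder_ge_of_eventually_le atTop hev1
  have hlim_ge : (0 : ℝ) ≤ liminf f atTop := le_liminf_of_le hcobdd hev0
  by_contra hne
  have hpos : 0 < liminf f atTop := lt_of_le_of_ne hlim_ge (Ne.symm hne)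
  -- choose the margin m
  set c := liminf f atTop with hc
  set m : ℝ := min (c / 2) (1 / 2) with hm
  have hm0 : 0 < m := lt_min (by linarith) (by norm_num)
  have hm1 : m ≤ 1 := (min_le_right _ _).trans (by norm_num)
  have hmlt : m < c := lt_of_le_of_lt (min_le_left _ _) (by linarith)
  have hev : ∀ᶠ t in atTop, m < f t := eventually_lt_of_lt_liminf hmlt hbdd
  obtain ⟨T₀, hT₀⟩ := eventually_atTop.1 hev
  set T : ℝ := max T₀ 1 with hT
  have hT1 : (1 : ℝ) ≤ T := le_max_right _ _
  have hxm : ∀ t : ℝ, T ≤ t → ∀ i, m < x t i := by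
    intro t ht i
    exact lt_of_lt_of_le (hT₀ t ((le_max_left _ _).trans ht)) (hfle t i)
  -- the compact convex set S
  set S : Set (Fin d → ℝ) := stdSimplex ℝ (Fin d) ∩ Set.univ.pi (fun _ => Set.Ici m)
    with hS
  have hSc : IsCompact S :=
    (isCompact_stdSimplex _ _).inter_right (isClosed_set_pi fun i _ => isClosed_Ici)
  have hSconv : Convex ℝ S :=
    (convex_stdSimplex ℝ _).inter (convex_pi fun i _ => convex_Ici m)
  have hxS : ∀ t : ℝ, T ≤ t → x t ∈ S := by
    intro t ht
    refine ⟨hxsimplex t (by linarith), ?_⟩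
    intro i _
    exact le_of_lt (hxm t ht i)
  have hdisjS : ∀ q ∈ S, ¬ ∀ i j, A.mulVec q i = A.mulVec q j := by
    rintro q ⟨hq1, hq2⟩ hall
    exact hnorest ⟨q, hq1, fun i => lt_of_lt_of_le hm0 (hq2 i (Set.mem_univ i)), hall⟩
  obtain ⟨p, ε, hε, hpsum, hkey⟩ := stmt_10_sep A S hSc hSconv hdisjS
  -- the Lyapunov function
  set V : ℝ → ℝ := fun t => ∑ i, p i * Real.log (x t i) with hV
  have hrT : -r ≤ T := by linarith
  -- derivative of V
  have hderiv : ∀ t : ℝ, T + r < t →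
      HasDerivAt V (∑ i, p i * (A.mulVec (x (t - r)) i -
        ∑ k, x t k * A.mulVec (x (t - r)) k)) t := by
    intro t ht
    have ht0 : 0 < t := by linarith
    have htT : T ≤ t := by linarith
    have hx := hode t ht0
    refine HasDerivAt.fun_sum fun i _ => ?_
    have hxi : HasDerivAt (fun s => x s i)
        (x t i * (A.mulVec (x (t - r)) i - ∑ k, x t k * A.mulVec (x (t - r)) k)) t :=
      hasDerivAt_pi.1 hx i
    have hne0 : x t i ≠ 0 := ne_of_gt (lt_trans hm0 (hxm t htT i))
    have hlog := hxi.log hne0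
    rw [mul_comm (x t i), mul_div_assoc, div_self hne0, mul_one] at hlog
    exact hlog.const_mul (p i)
  -- the derivative is bounded below by ε beyond T + r
  have hderiv_ge : ∀ t : ℝ, T + r < t →
      ε ≤ ∑ i, p i * (A.mulVec (x (t - r)) i -
        ∑ k, x t k * A.mulVec (x (t - r)) k) := by
    intro t ht
    have htr : T ≤ t - r := by linarith
    have hq : x (t - r) ∈ S := hxS _ htr
    have hkey' := hkey _ hq
    have hsum : ∑ i, p i * (A.mulVec (x (t - r)) i -
        ∑ k, x t k * A.mulVec (x (t - r)) k)
        = ∑ i, p i * A.mulVec (x (t - r)) i -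
          (∑ i, p i) * (∑ k, x t k * A.mulVec (x (t - r)) k) := by
      rw [Finset.sum_mul]
      rw [← Finset.sum_sub_distrib]
      refine Finset.sum_congr rfl fun i _ => by ring
    rw [hsum, hpsum, zero_mul, sub_zero]
    exact hkey'
  -- continuity of V on [T + r, ∞)
  have hsub : Set.Ici (T + r) ⊆ Set.Ici (-r) := by
    intro s hs
    simp only [Set.mem_Ici] at hs ⊢
    linarith
  have hVcont : ContinuousOn V (Set.Ici (T + r)) := by
    refine continuousOn_finset_sum _ fun i _ => ?_
    refine ContinuousOn.mul continuousOn_const ?_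
    refine ContinuousOn.log ?_ ?_
    · exact (continuous_apply i).comp_continuousOn (hxcont.mono hsub)
    · intro s hs
      have hsT : T ≤ s := by simp only [Set.mem_Ici] at hs; linarith
      exact ne_of_gt (lt_trans hm0 (hxm s hsT i))
  -- growth estimate
  have hgrow : ∀ t : ℝ, T + r ≤ t → ε * (t - (T + r)) ≤ V t - V (T + r) := by
    intro t ht
    have hint : interior (Set.Ici (T + r)) = Set.Ioi (T + r) := interior_Ici
    refine Convex.mul_sub_le_image_sub_of_le_deriv (convex_Ici (T + r)) hVcont ?_ ?_
      (T + r) Set.self_mem_Ici t ht ht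
    · intro s hs
      rw [hint] at hs
      exact (hderiv s hs).differentiableAt.differentiableWithinAt
    · intro s hs
      rw [hint] at hs
      rw [(hderiv s hs).deriv]
      exact hderiv_ge s hs
  -- boundedness of V
  set B : ℝ := (∑ i, |p i|) * (-Real.log m) with hB
  have hlogm : Real.log m ≤ 0 := Real.log_nonpos (le_of_lt hm0) hm1
  have hB0 : 0 ≤ B := by
    refine mul_nonneg (Finset.sum_nonneg fun i _ => abs_nonneg _) (by linarith)
  have hVbound : ∀ t : ℝ, T ≤ t → |V t| ≤ B := by
    intro t ht
    have hrt : -r ≤ t := by linarith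
    calc |V t| ≤ ∑ i, |p i * Real.log (x t i)| := Finset.abs_sum_le_sum_abs _ _
      _ ≤ ∑ i, |p i| * (-Real.log m) := by
          refine Finset.sum_le_sum fun i _ => ?_
          rw [abs_mul]
          refine mul_le_mul_of_nonneg_left ?_ (abs_nonneg _)
          have h1 : Real.log (x t i) ≤ 0 :=
            Real.log_nonpos (hx0 t hrt i) (hx1 t hrt i)
          have h2 : Real.log m ≤ Real.log (x t i) :=
            Real.log_le_log hm0 (le_of_lt (hxm t ht i))
          rw [abs_of_nonpos h1]
          linarith
      _ = B := by rw [hB, Finset.sum_mul]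
  -- contradiction
  set t₁ : ℝ := T + r + (2 * B + 1) / ε with ht₁
  have ht₁ge : T + r ≤ t₁ := by
    rw [ht₁]
    have h0 : 0 ≤ (2 * B + 1) / ε := div_nonneg (by linarith) (le_of_lt hε)
    linarith
  have h1 := hgrow t₁ ht₁ge
  have h2 : ε * (t₁ - (T + r)) = 2 * B + 1 := by
    rw [ht₁]
    field_simp
    ring
  have h3 : |V t₁| ≤ B := hVbound t₁ (by linarith)
  have h4 : |V (T + r)| ≤ B := hVbound (T + r) (by linarith)
  have h5 := abs_le.1 h3
  have h6 := abs_le.1 h4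
  rw [h2] at h1
  linarith [h5.2, h6.1]
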